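/- Let p ≥ 3 be an integer and λ ≥ 0. Let f : (0,∞) → ℝ be monotone non-decreasing and such that for every integer m ≥ p, f is integrable with respect to χ²_m and the Poisson-mixture series Σ_{k≥0} e^{-λ/2}(λ/2)^k/k! · E_{χ²_{p+2k}}[|f|] and Σ_{k≥0} e^{-λ/2}(λ/2)^k/k! · E_{χ²_{p+2+2k}}[|f|] converge. Then E_{χ²_{p+2}(λ)}[f] ≥ E_{χ²_p(λ)}[f]. -/

import Mathlib

open MeasureTheory ProbabilityTheory

/-- The chi-square distribution with `m` degrees of freedom: the Gamma distribution
with shape `m/2` and rate `1/2`. -/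
noncomputable def chiSq (m : ℕ) : Measure ℝ := gammaMeasure ((m : ℝ) / 2) (1 / 2)

/-- Expectation of `f` under the chi-square distribution with `m` degrees of freedom. -/
noncomputable def chiSqExp (m : ℕ) (f : ℝ → ℝ) : ℝ := ∫ u, f u ∂(chiSq m)

/-- Expectation of `f` under the noncentral chi-square distribution with `p` degrees of
freedom and noncentrality parameter `lam`, as a Poisson mixture of central chi-squares. -/
noncomputable def ncChiSqExp (p : ℕ) (lam : ℝ) (f : ℝ → ℝ) : ℝ :=
  ∑' k : ℕ, (Real.exp (-(lam / 2)) * (lam / 2) ^ k / (Nat.factorial k)) * chiSqExp (p + 2 * k) f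

/-- NNReal-valued gamma pdf with rate `1/2`. -/
noncomputable def gpdfN (a : ℝ) (x : ℝ) : NNReal := (gammaPDFReal a (1/2) x).toNNReal

lemma gammaMeasure_eq_withDensityN (a : ℝ) :
    gammaMeasure a (1/2) = MeasureTheory.Measure.withDensity volume
      (fun x => (gpdfN a x : ENNReal)) := rfl

lemma gpdfN_coe (a : ℝ) (ha : 0 < a) (x : ℝ) :
    ((gpdfN a x : ℝ)) = gammaPDFReal a (1/2) x :=
  Real.coe_toNNReal _ (gammaPDFReal_nonneg ha (by norm_num) x)

lemma measurable_gpdfN (a : ℝ) : Measurable (gpdfN a) :=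
  (measurable_gammaPDFReal a (1/2)).real_toNNReal

lemma integrable_gamma_iff (a : ℝ) (g : ℝ → ℝ) :
    Integrable g (gammaMeasure a (1/2)) ↔
      Integrable (fun x => (gpdfN a x : ℝ) * g x) volume := by
  rw [gammaMeasure_eq_withDensityN]
  have h := integrable_withDensity_iff_integrable_smul (E := ℝ) (μ := volume)
    (measurable_gpdfN a) (g := g)
  exact (by simpa only [NNReal.smul_def, smul_eq_mul] using h)

lemma integral_gamma_eq (a : ℝ) (g : ℝ → ℝ) :
    ∫ x, g x ∂(gammaMeasure a (1/2)) = ∫ x, (gpdfN a x : ℝ) * g x := by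
  rw [gammaMeasure_eq_withDensityN, integral_withDensity_eq_integral_smul (measurable_gpdfN a)]
  simp only [NNReal.smul_def, smul_eq_mul]

lemma gammaPDFReal_zero (a : ℝ) (ha : 1 < a) : gammaPDFReal a (1/2) 0 = 0 := by
  unfold gammaPDFReal
  rw [if_pos le_rfl, Real.zero_rpow (by linarith : a - 1 ≠ 0)]
  ring

/-- Key pointwise pdf relation: for `x ≥ 0`,
`gammaPDFReal (a+1) (1/2) x = gammaPDFReal a (1/2) x * (x / (2*a))`. -/
lemma gammaPDFReal_succ (a : ℝ) (ha : 0 < a) (x : ℝ) (hx : 0 ≤ x) :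
    gammaPDFReal (a+1) (1/2) x = gammaPDFReal a (1/2) x * (x / (2*a)) := by
  rcases eq_or_lt_of_le hx with h | h
  · rw [← h, gammaPDFReal_zero (a+1) (by linarith)]
    ring
  · unfold gammaPDFReal
    rw [if_pos hx, if_pos hx,
      Real.rpow_add (by norm_num : (0:ℝ) < 1/2) a 1, Real.rpow_one,
      Real.Gamma_add_one ha.ne',
      show a + 1 - 1 = (a - 1) + 1 by ring,
      Real.rpow_add h (a-1) 1, Real.rpow_one]
    have hΓ : Real.Gamma a ≠ 0 := (Real.Gamma_pos_of_pos ha).ne'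
    field_simp

/-- Single-step stochastic dominance for chi-square distributions. -/
lemma chiSqExp_step (m : ℕ) (hm : 3 ≤ m) (f : ℝ → ℝ)
    (hmono : MonotoneOn f (Set.Ioi (0 : ℝ)))
    (h1 : Integrable f (chiSq m)) (h2 : Integrable f (chiSq (m + 2))) :
    chiSqExp m f ≤ chiSqExp (m + 2) f := by
  have hm3 : (3:ℝ) ≤ (m:ℝ) := by exact_mod_cast hm
  set a : ℝ := (m : ℝ) / 2 with ha_def
  have ha : 0 < a := by rw [ha_def]; linarith
  have ha1 : 1 < a := by rw [ha_def]; linarith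
  have hmpos : (0:ℝ) < (m:ℝ) := by linarith
  have hchi1 : chiSq m = gammaMeasure a (1/2) := rfl
  have hchi2 : chiSq (m+2) = gammaMeasure (a+1) (1/2) := by
    rw [chiSq]
    congr 1
    push_cast
    rw [ha_def]; ring
  haveI hprob1 : IsProbabilityMeasure (chiSq m) := by
    rw [hchi1]; exact isProbabilityMeasure_gammaMeasure ha (by norm_num)
  haveI hprob2 : IsProbabilityMeasure (chiSq (m+2)) := by
    rw [hchi2]; exact isProbabilityMeasure_gammaMeasure (by linarith) (by norm_num)
  set c : ℝ := f (m:ℝ) with hc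
  set F : ℝ → ℝ := fun x => f x - c with hF
  -- pointwise nonnegativity of (f x - c) * (pdf_{a+1} x - pdf_a x)
  have hpt : ∀ x : ℝ, 0 ≤ F x * ((gpdfN (a+1) x : ℝ) - (gpdfN a x : ℝ)) := by
    intro x
    rw [gpdfN_coe _ (by linarith) x, gpdfN_coe a ha x]
    rcases lt_trichotomy x 0 with hx | hx | hx
    · have e1 : gammaPDFReal (a+1) (1/2) x = 0 := by
        unfold gammaPDFReal; rw [if_neg (not_le.mpr hx)]
      have e2 : gammaPDFReal a (1/2) x = 0 := by
        unfold gammaPDFReal; rw [if_neg (not_le.mpr hx)]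
      rw [e1, e2]; ring_nf; simp
    · rw [hx, gammaPDFReal_zero (a+1) (by linarith), gammaPDFReal_zero a ha1]
      simp
    · rw [gammaPDFReal_succ a ha x hx.le]
      have hg0 : 0 ≤ gammaPDFReal a (1/2) x := gammaPDFReal_nonneg ha (by norm_num) x
      have h2a : 2*a = (m:ℝ) := by rw [ha_def]; ring
      have key : gammaPDFReal a (1/2) x * (x / (2*a)) - gammaPDFReal a (1/2) x
          = gammaPDFReal a (1/2) x * ((x - (m:ℝ)) / (m:ℝ)) := by
        rw [h2a]; field_simp
      rw [key]
      rcases le_total x (m:ℝ) with hxm | hxm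
      · have hf : f x ≤ c := hmono (Set.mem_Ioi.mpr hx) (Set.mem_Ioi.mpr hmpos) hxm
        have hFc : F x ≤ 0 := by rw [hF]; simp; linarith
        have hq : gammaPDFReal a (1/2) x * ((x - (m:ℝ)) / (m:ℝ)) ≤ 0 :=
          mul_nonpos_of_nonneg_of_nonpos hg0
            (div_nonpos_of_nonpos_of_nonneg (by linarith) hmpos.le)
        nlinarith
      · have hf : c ≤ f x := hmono (Set.mem_Ioi.mpr hmpos) (Set.mem_Ioi.mpr hx) hxm
        have hFc : 0 ≤ F x := by rw [hF]; simp; linarith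
        apply mul_nonneg hFc
        exact mul_nonneg hg0 (div_nonneg (by linarith) hmpos.le)
  -- integrability transfers
  have hF1 : Integrable F (gammaMeasure a (1/2)) := by
    rw [← hchi1]; exact h1.sub (integrable_const c)
  have hF2 : Integrable F (gammaMeasure (a+1) (1/2)) := by
    rw [← hchi2]; exact h2.sub (integrable_const c)
  have hI1 : Integrable (fun x => (gpdfN a x : ℝ) * F x) volume :=
    (integrable_gamma_iff a F).mp hF1
  have hI2 : Integrable (fun x => (gpdfN (a+1) x : ℝ) * F x) volume :=
    (integrable_gamma_iff (a+1) F).mp hF2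
  have hdiff : 0 ≤ ∫ x, ((gpdfN (a+1) x : ℝ) * F x - (gpdfN a x : ℝ) * F x) := by
    apply integral_nonneg
    intro x
    have h := hpt x
    have e : F x * ((gpdfN (a+1) x : ℝ) - (gpdfN a x : ℝ))
        = (gpdfN (a+1) x : ℝ) * F x - (gpdfN a x : ℝ) * F x := by ring
    rw [e] at h
    exact h
  rw [integral_sub hI2 hI1, ← integral_gamma_eq, ← integral_gamma_eq] at hdiff
  have e1 : ∫ x, F x ∂(gammaMeasure a (1/2)) = chiSqExp m f - c := by
    rw [← hchi1, hF]
    rw [integral_sub h1 (integrable_const c), integral_const]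
    simp [chiSqExp]
  have e2 : ∫ x, F x ∂(gammaMeasure (a+1) (1/2)) = chiSqExp (m+2) f - c := by
    rw [← hchi2, hF]
    rw [integral_sub h2 (integrable_const c), integral_const]
    simp [chiSqExp]
  rw [e1, e2] at hdiff
  linarith

theorem stmt_1 (p : ℕ) (hp : 3 ≤ p) (lam : ℝ) (hlam : 0 ≤ lam) (f : ℝ → ℝ)
    (hmono : MonotoneOn f (Set.Ioi (0 : ℝ)))
    (hint : ∀ m : ℕ, p ≤ m → Integrable f (chiSq m))
    (hsum1 : Summable (fun k : ℕ =>
      (Real.exp (-(lam / 2)) * (lam / 2) ^ k / (Nat.factorial k)) *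
        chiSqExp (p + 2 * k) (fun u => |f u|)))
    (hsum2 : Summable (fun k : ℕ =>
      (Real.exp (-(lam / 2)) * (lam / 2) ^ k / (Nat.factorial k)) *
        chiSqExp (p + 2 + 2 * k) (fun u => |f u|))) :
    ncChiSqExp p lam f ≤ ncChiSqExp (p + 2) lam f := by
  have hck : ∀ k : ℕ, 0 ≤ Real.exp (-(lam / 2)) * (lam / 2) ^ k / (Nat.factorial k) := by
    intro k; positivity
  have habs : ∀ m : ℕ, |chiSqExp m f| ≤ chiSqExp m (fun u => |f u|) := by
    intro m
    simpa [chiSqExp, Real.norm_eq_abs] using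
      norm_integral_le_integral_norm (μ := chiSq m) f
  have hbound : ∀ (m : ℕ) (k : ℕ),
      ‖(Real.exp (-(lam / 2)) * (lam / 2) ^ k / (Nat.factorial k)) * chiSqExp m f‖
        ≤ (Real.exp (-(lam / 2)) * (lam / 2) ^ k / (Nat.factorial k)) *
            chiSqExp m (fun u => |f u|) := by
    intro m k
    rw [norm_mul, Real.norm_eq_abs, Real.norm_eq_abs, abs_of_nonneg (hck k)]
    exact mul_le_mul_of_nonneg_left (habs m) (hck k)
  have hS1 : Summable (fun k : ℕ =>
      (Real.exp (-(lam / 2)) * (lam / 2) ^ k / (Nat.factorial k)) * chiSqExp (p + 2 * k) f) :=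
    Summable.of_norm_bounded hsum1 (fun k => hbound (p + 2 * k) k)
  have hS2 : Summable (fun k : ℕ =>
      (Real.exp (-(lam / 2)) * (lam / 2) ^ k / (Nat.factorial k)) * chiSqExp (p + 2 + 2 * k) f) :=
    Summable.of_norm_bounded hsum2 (fun k => hbound (p + 2 + 2 * k) k)
  unfold ncChiSqExp
  refine Summable.tsum_le_tsum (fun k => ?_) hS1 hS2
  refine mul_le_mul_of_nonneg_left ?_ (hck k)
  have hEq : p + 2 + 2 * k = (p + 2 * k) + 2 := by omega
  rw [hEq]
  exact chiSqExp_step (p + 2 * k) (by omega) f hmono (hint _ (by omega)) (hint _ (by omega))
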